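/- arXiv:1308.0586 — 4 statements merged into one kernel-verified Lean document; each statement's English description precedes it below -/
import Mathlib

section
/- Let f : ℝⁿ → ℝⁿ be continuously differentiable with Jacobian J(x), let |·| be a norm on ℝⁿ with induced matrix norm ‖·‖ and matrix measure μ(A) = lim_{h→0⁺} (‖I + hA‖ − 1)/h. If there exists c > 0 such that μ(J(x)) ≤ −c for all x, then for every solution x(t) of ẋ = f(x), the inequality |f(x(t))| ≤ |f(x(0))| e^{−ct} holds for all t ≥ 0. -/
open Matrix Filter Set Topology

/-- `N` is a norm on `ℝⁿ`. -/
def IsNorm {n : ℕ} (N : (Fin n → ℝ) → ℝ) : Prop :=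
  (∀ v, N v = 0 ↔ v = 0) ∧
  (∀ (c : ℝ) v, N (c • v) = |c| * N v) ∧
  (∀ u v, N (u + v) ≤ N u + N v)

/-- Operator (induced matrix) norm of `A` with respect to the vector norm `N`. -/
noncomputable def opNorm {n : ℕ} (N : (Fin n → ℝ) → ℝ)
    (A : Matrix (Fin n) (Fin n) ℝ) : ℝ :=
  sSup ((fun v => N (A.mulVec v)) '' {v | N v ≤ 1})

/-- Matrix measure (logarithmic norm): `μ(A) = lim_{h→0⁺} (‖I + hA‖ − 1)/h`. -/
noncomputable def matMeasure {n : ℕ} (N : (Fin n → ℝ) → ℝ)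
    (A : Matrix (Fin n) (Fin n) ℝ) : ℝ :=
  limUnder (𝓝[>] (0:ℝ)) (fun h => (opNorm N (1 + h • A) - 1) / h)

/-- The Jacobian matrix of `f` at `x`. -/
noncomputable def jac {n : ℕ} (f : (Fin n → ℝ) → (Fin n → ℝ)) (x : Fin n → ℝ) :
    Matrix (Fin n) (Fin n) ℝ :=
  LinearMap.toMatrix' (fderiv ℝ f x).toLinearMap

/-- Upper right Dini derivative. -/
noncomputable def diniUpper (φ : ℝ → ℝ) (t : ℝ) : ℝ :=
  limsup (fun h => (φ (t + h) - φ t) / h) (𝓝[>] (0:ℝ))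

variable {n : ℕ} {N : (Fin n → ℝ) → ℝ}

lemma mm_zero (hN : IsNorm N) : N 0 = 0 := (hN.1 0).mpr rfl

lemma mm_neg (hN : IsNorm N) (v) : N (-v) = N v := by
  have := hN.2.1 (-1) v; simpa using this

lemma mm_nonneg (hN : IsNorm N) (v) : 0 ≤ N v := by
  have h := hN.2.2 v (-v)
  rw [add_neg_cancel, mm_zero hN, mm_neg hN] at h
  linarith

lemma mm_sum_le (hN : IsNorm N) {ι : Type*} (s : Finset ι) (g : ι → (Fin n → ℝ)) :
    N (∑ i ∈ s, g i) ≤ ∑ i ∈ s, N (g i) := by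
  classical
  induction s using Finset.induction with
  | empty => simp [mm_zero hN]
  | insert _ _ h ih =>
    rw [Finset.sum_insert h, Finset.sum_insert h]
    exact le_trans (hN.2.2 _ _) (by linarith)

lemma mm_upper (hN : IsNorm N) : ∃ C : ℝ, 0 < C ∧ ∀ v, N v ≤ C * ‖v‖ := by
  classical
  refine ⟨(∑ i, N (fun j => if i = j then (1:ℝ) else 0)) + 1, ?_, ?_⟩
  · have : 0 ≤ ∑ i, N (fun j => if i = j then (1:ℝ) else 0) :=
      Finset.sum_nonneg fun i _ => mm_nonneg hN _
    linarith
  · intro v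
    have hv : v = ∑ i, v i • fun j => if i = j then (1:ℝ) else 0 := pi_eq_sum_univ v
    calc N v ≤ ∑ i, N (v i • fun j => if i = j then (1:ℝ) else 0) := by
            conv_lhs => rw [hv]
            exact mm_sum_le hN _ _
      _ = ∑ i, |v i| * N (fun j => if i = j then (1:ℝ) else 0) := by
            simp [hN.2.1]
      _ ≤ ∑ i, ‖v‖ * N (fun j => if i = j then (1:ℝ) else 0) := by
            refine Finset.sum_le_sum fun i _ => ?_
            exact mul_le_mul_of_nonneg_right (by simpa using norm_le_pi_norm v i) (mm_nonneg hN _)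
      _ = (∑ i, N (fun j => if i = j then (1:ℝ) else 0)) * ‖v‖ := by
            rw [Finset.sum_mul]
            exact Finset.sum_congr rfl fun i _ => mul_comm _ _
      _ ≤ _ := by nlinarith [norm_nonneg v]

lemma mm_cont (hN : IsNorm N) : Continuous N := by
  obtain ⟨C, hC, hCb⟩ := mm_upper hN
  have key : ∀ u v, N u - N v ≤ C * ‖u - v‖ := by
    intro u v
    have h1 : N u ≤ N (u - v) + N v := by
      have := hN.2.2 (u - v) v; simpa using this
    have := hCb (u - v)
    linarith
  have : LipschitzWith (Real.toNNReal C) N := by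
    apply LipschitzWith.of_dist_le_mul
    intro u v
    rw [Real.dist_eq, Real.coe_toNNReal _ hC.le, dist_eq_norm]
    have h1 := key u v
    have h2 := key v u
    rw [← norm_neg, neg_sub] at h2
    exact abs_le.mpr ⟨by linarith, h1⟩
  exact this.continuous

lemma mm_lower (hN : IsNorm N) (hn : 0 < n) : ∃ m : ℝ, 0 < m ∧ ∀ v, m * ‖v‖ ≤ N v := by
  haveI : Nonempty (Fin n) := ⟨⟨0, hn⟩⟩
  obtain ⟨w, hw, hmin⟩ := (isCompact_sphere (0 : Fin n → ℝ) 1).exists_isMinOn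
    (NormedSpace.sphere_nonempty.mpr zero_le_one) (mm_cont hN).continuousOn
  have hw1 : ‖w‖ = 1 := mem_sphere_zero_iff_norm.mp hw
  have hwne : w ≠ 0 := by intro h; rw [h] at hw1; simp at hw1
  have hm : 0 < N w := by
    rcases (mm_nonneg hN w).lt_or_eq with h | h
    · exact h
    · exact absurd ((hN.1 w).mp h.symm) hwne
  refine ⟨N w, hm, fun v => ?_⟩
  rcases eq_or_ne v 0 with rfl | hv
  · simp [mm_zero hN]
  · have hvn : 0 < ‖v‖ := norm_pos_iff.mpr hv
    have hu : (‖v‖⁻¹ • v) ∈ Metric.sphere (0 : Fin n → ℝ) 1 := by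
      simp [norm_smul, abs_of_pos (inv_pos.mpr hvn), inv_mul_cancel₀ hvn.ne']
    have := hmin hu
    rw [IsMinOn] at *
    have h2 : N w ≤ ‖v‖⁻¹ * N v := by
      have := hmin hu
      simpa [hN.2.1, abs_of_pos (inv_pos.mpr hvn)] using this
    calc N w * ‖v‖ ≤ (‖v‖⁻¹ * N v) * ‖v‖ := by nlinarith
      _ = N v := by field_simp

lemma op_set_nonempty (hN : IsNorm N) (A : Matrix (Fin n) (Fin n) ℝ) :
    ((fun v => N (A.mulVec v)) '' {v | N v ≤ 1}).Nonempty :=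
  ⟨N (A.mulVec 0), 0, by simp [mm_zero hN], rfl⟩

lemma op_bddAbove (hN : IsNorm N) (hn : 0 < n) (A : Matrix (Fin n) (Fin n) ℝ) :
    BddAbove ((fun v => N (A.mulVec v)) '' {v | N v ≤ 1}) := by
  obtain ⟨C, hC, hCb⟩ := mm_upper hN
  obtain ⟨m, hm, hmb⟩ := mm_lower hN hn
  obtain ⟨K, hK, hKb⟩ : ∃ K : ℝ, 0 ≤ K ∧ ∀ v, ‖A.mulVec v‖ ≤ K * ‖v‖ := by
    let L := LinearMap.toContinuousLinearMap (Matrix.mulVecLin A)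
    exact ⟨‖L‖, norm_nonneg _, fun v => by
      simpa [L, Matrix.mulVecLin_apply] using L.le_opNorm v⟩
  refine ⟨C * K * (1/m), ?_⟩
  rintro y ⟨v, hv, rfl⟩
  have h1 : ‖v‖ ≤ 1/m := by
    rw [Set.mem_setOf_eq] at hv
    have h := hmb v
    rw [le_div_iff₀ hm]
    nlinarith
  calc N (A.mulVec v) ≤ C * ‖A.mulVec v‖ := hCb _
    _ ≤ C * (K * ‖v‖) := by nlinarith [hKb v, norm_nonneg (A.mulVec v)]
    _ ≤ C * K * (1/m) := by
        have := mul_le_mul_of_nonneg_left h1 (mul_nonneg hC.le hK)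
        nlinarith

lemma opNorm_nonneg (hN : IsNorm N) (hn : 0 < n) (A : Matrix (Fin n) (Fin n) ℝ) :
    0 ≤ opNorm N A := by
  have h0 : (0:ℝ) ∈ (fun v => N (A.mulVec v)) '' {v | N v ≤ 1} :=
    ⟨0, by simp [mm_zero hN], by simp [mm_zero hN]⟩
  exact le_csSup (op_bddAbove hN hn A) h0

lemma opNorm_le (hN : IsNorm N) (A : Matrix (Fin n) (Fin n) ℝ) {B : ℝ}
    (h : ∀ v, N v ≤ 1 → N (A.mulVec v) ≤ B) : opNorm N A ≤ B := by
  apply csSup_le (op_set_nonempty hN A)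
  rintro y ⟨v, hv, rfl⟩; exact h v hv

lemma opNorm_mulVec_le (hN : IsNorm N) (hn : 0 < n) (A : Matrix (Fin n) (Fin n) ℝ) (v) :
    N (A.mulVec v) ≤ opNorm N A * N v := by
  rcases eq_or_ne v 0 with rfl | hv
  · simp [mm_zero hN]
  · have hvn : 0 < N v := by
      rcases (mm_nonneg hN v).lt_or_eq with h | h
      · exact h
      · exact absurd ((hN.1 v).mp h.symm) hv
    have hu : N ((N v)⁻¹ • v) ≤ 1 := by
      rw [hN.2.1, abs_of_pos (inv_pos.mpr hvn), inv_mul_cancel₀ hvn.ne']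
    have h2 : N (A.mulVec ((N v)⁻¹ • v)) ≤ opNorm N A :=
      le_csSup (op_bddAbove hN hn A) ⟨_, hu, rfl⟩
    rw [Matrix.mulVec_smul, hN.2.1, abs_of_pos (inv_pos.mpr hvn)] at h2
    calc N (A.mulVec v) = ((N v)⁻¹ * N (A.mulVec v)) * N v := by field_simp
      _ ≤ opNorm N A * N v := by nlinarith

lemma opNorm_add_le (hN : IsNorm N) (hn : 0 < n) (A B : Matrix (Fin n) (Fin n) ℝ) :
    opNorm N (A + B) ≤ opNorm N A + opNorm N B := by
  apply opNorm_le hN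
  intro v hv
  rw [Matrix.add_mulVec]
  calc N (A.mulVec v + B.mulVec v) ≤ N (A.mulVec v) + N (B.mulVec v) := hN.2.2 _ _
    _ ≤ opNorm N A * N v + opNorm N B * N v :=
      add_le_add (opNorm_mulVec_le hN hn A v) (opNorm_mulVec_le hN hn B v)
    _ ≤ opNorm N A + opNorm N B := by
      nlinarith [opNorm_nonneg hN hn A, opNorm_nonneg hN hn B, mm_nonneg hN v]

lemma opNorm_smul_le (hN : IsNorm N) (hn : 0 < n) (a : ℝ) (A : Matrix (Fin n) (Fin n) ℝ) :
    opNorm N (a • A) ≤ |a| * opNorm N A := by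
  apply opNorm_le hN
  intro v hv
  rw [Matrix.smul_mulVec, hN.2.1]
  have h := opNorm_mulVec_le hN hn A v
  have h2 : N (A.mulVec v) ≤ opNorm N A := by nlinarith [opNorm_nonneg hN hn A, mm_nonneg hN v]
  nlinarith [abs_nonneg a]

lemma opNorm_one (hN : IsNorm N) (hn : 0 < n) : opNorm N (1 : Matrix (Fin n) (Fin n) ℝ) = 1 := by
  apply le_antisymm
  · apply opNorm_le hN
    intro v hv; rwa [Matrix.one_mulVec]
  · set e : Fin n → ℝ := Pi.single ⟨0, hn⟩ 1 with he
    have hene : e ≠ 0 := by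
      intro h
      have := congrFun h ⟨0, hn⟩
      simp [he, Pi.single_eq_same] at this
    have hepos : 0 < N e := by
      rcases (mm_nonneg hN e).lt_or_eq with h | h
      · exact h
      · exact absurd ((hN.1 e).mp h.symm) hene
    have hu : N ((N e)⁻¹ • e) = 1 := by
      rw [hN.2.1, abs_of_pos (inv_pos.mpr hepos), inv_mul_cancel₀ hepos.ne']
    have : (1:ℝ) ∈ (fun v => N ((1 : Matrix (Fin n) (Fin n) ℝ).mulVec v)) '' {v | N v ≤ 1} :=
      ⟨(N e)⁻¹ • e, hu.le, by simp only [Matrix.one_mulVec]; exact hu⟩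
    exact le_csSup (op_bddAbove hN hn 1) this

lemma mm_tendsto (hN : IsNorm N) (hn : 0 < n) (A : Matrix (Fin n) (Fin n) ℝ) :
    Tendsto (fun h => (opNorm N (1 + h • A) - 1) / h) (𝓝[>] (0:ℝ))
      (𝓝 (matMeasure N A)) := by
  set φ : ℝ → ℝ := fun h => (opNorm N (1 + h • A) - 1) / h with hφ
  have hmono : MonotoneOn φ (Ioi (0:ℝ)) := by
    intro h₁ h1m h₂ h2m hle
    have h1p : (0:ℝ) < h₁ := h1m
    have h2p : (0:ℝ) < h₂ := h2m
    set t := h₁ / h₂ with ht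
    have htp : 0 < t := div_pos h1p h2p
    have ht1 : t ≤ 1 := div_le_one_of_le₀ hle h2p.le
    have hdecomp : 1 + h₁ • A = (1 - t) • (1 : Matrix (Fin n) (Fin n) ℝ) + t • (1 + h₂ • A) := by
      rw [smul_add, smul_smul, ← add_assoc, ← add_smul]
      have : t * h₂ = h₁ := div_mul_cancel₀ h₁ h2p.ne'
      rw [this, sub_add_cancel, one_smul]
    have hop : opNorm N (1 + h₁ • A) ≤ (1 - t) + t * opNorm N (1 + h₂ • A) := by
      rw [hdecomp]
      calc opNorm N _ ≤ opNorm N ((1-t) • (1 : Matrix (Fin n) (Fin n) ℝ))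
            + opNorm N (t • (1 + h₂ • A)) := opNorm_add_le hN hn _ _
        _ ≤ |1-t| * opNorm N 1 + |t| * opNorm N (1 + h₂ • A) :=
            add_le_add (opNorm_smul_le hN hn _ _) (opNorm_smul_le hN hn _ _)
        _ = (1 - t) + t * opNorm N (1 + h₂ • A) := by
            rw [opNorm_one hN hn, abs_of_nonneg (by linarith), abs_of_pos htp, mul_one]
    rw [hφ]
    simp only
    rw [div_le_div_iff₀ h1p h2p]
    have ht2 : t * h₂ = h₁ := div_mul_cancel₀ h₁ h2p.ne'
    have key := mul_le_mul_of_nonneg_right hop h2p.le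
    have expand : (1 - t + t * opNorm N (1 + h₂ • A)) * h₂
        = h₂ - h₁ + h₁ * opNorm N (1 + h₂ • A) := by rw [← ht2]; ring
    rw [expand] at key
    nlinarith
  have hbdd : BddBelow (φ '' Ioi (0:ℝ)) := by
    refine ⟨-opNorm N A, ?_⟩
    rintro y ⟨h, hh, rfl⟩
    have hp : (0:ℝ) < h := hh
    have h1 : (1 : Matrix (Fin n) (Fin n) ℝ) = (1 + h • A) + (-h) • A := by
      rw [neg_smul]; abel
    have h2 : (1:ℝ) ≤ opNorm N (1 + h • A) + h * opNorm N A := by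
      calc (1:ℝ) = opNorm N 1 := (opNorm_one hN hn).symm
        _ = opNorm N ((1 + h • A) + (-h) • A) := by rw [← h1]
        _ ≤ opNorm N (1 + h • A) + opNorm N ((-h) • A) := opNorm_add_le hN hn _ _
        _ ≤ opNorm N (1 + h • A) + |(-h)| * opNorm N A :=
            add_le_add le_rfl (opNorm_smul_le hN hn _ _)
        _ = opNorm N (1 + h • A) + h * opNorm N A := by
            rw [abs_neg, abs_of_pos hp]
    rw [hφ]
    simp only
    rw [le_div_iff₀ hp]
    nlinarith
  have := hmono.tendsto_nhdsGT hbdd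
  have heq : matMeasure N A = sInf (φ '' Ioi 0) := this.limUnder_eq
  rw [heq]; exact this

lemma jac_mulVec {f : (Fin n → ℝ) → (Fin n → ℝ)} (z v : Fin n → ℝ) :
    (jac f z).mulVec v = fderiv ℝ f z v := by
  rw [jac, ← Matrix.toLin'_apply, Matrix.toLin'_toMatrix']; rfl


/-- Main theorem: if `μ(J(x)) ≤ -c < 0` for all `x`, then `|f(x(t))| ≤ |f(x(0))| e^{-ct}`. -/
theorem stmt_0 {n : ℕ} (N : (Fin n → ℝ) → ℝ) (hN : IsNorm N)
    (f : (Fin n → ℝ) → (Fin n → ℝ)) (hf : ContDiff ℝ 1 f)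
    (c : ℝ) (hc : 0 < c) (hμ : ∀ x, matMeasure N (jac f x) ≤ -c)
    (x : ℝ → (Fin n → ℝ))
    (hx : ∀ t ∈ Ici (0:ℝ), HasDerivWithinAt x (f (x t)) (Ici 0) t) :
    ∀ t ∈ Ici (0:ℝ), N (f (x t)) ≤ N (f (x 0)) * Real.exp (-c * t) := by
  rcases Nat.eq_zero_or_pos n with rfl | hn
  · intro t ht
    have h1 : f (x t) = 0 := Subsingleton.elim _ _
    have h2 : f (x 0) = 0 := Subsingleton.elim _ _
    rw [h1, h2, mm_zero hN]
    positivity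
  intro T hT
  have hxc : ContinuousOn x (Ici 0) := fun t ht => (hx t ht).continuousWithinAt
  have hgc : ContinuousOn (fun t => N (f (x t))) (Icc 0 T) :=
    ((mm_cont hN).comp hf.continuous).comp_continuousOn (hxc.mono Icc_subset_Ici_self)
  -- the slope condition
  have hslope : ∀ t ∈ Ico (0:ℝ) T, ∀ r, -c * N (f (x t)) < r →
      ∃ᶠ z in 𝓝[>] t, (z - t)⁻¹ * (N (f (x z)) - N (f (x t))) < r := by
    intro t ht r hr
    set A := jac f (x t) with hA
    set gt := N (f (x t)) with hgt
    have hgt0 : 0 ≤ gt := mm_nonneg hN _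
    set ε₀ := r - (-c * gt) with hε₀def
    have hε₀ : 0 < ε₀ := by rw [hε₀def]; linarith
    set ε₁ := ε₀ / (2 * (gt + 1)) with hε₁def
    have hε₁ : 0 < ε₁ := by positivity
    have htI : t ∈ Ici (0:ℝ) := ht.1
    -- derivative of y := f ∘ x
    have hyd : HasDerivWithinAt (fun s => f (x s)) (A.mulVec (f (x t))) (Ici 0) t := by
      have h1 := ((hf.differentiable one_ne_zero) (x t)).hasFDerivAt.comp_hasDerivWithinAt t (hx t htI)
      rw [hA, jac_mulVec]
      exact h1
    -- the error term tends to 0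
    have hsub : 𝓝[>] t ≤ 𝓝[Ici 0 \ {t}] t :=
      nhdsWithin_mono t (fun z hz => ⟨le_trans ht.1 (le_of_lt hz), ne_of_gt hz⟩)
    have hd : Tendsto (fun z => N ((z - t)⁻¹ • (f (x z) - f (x t)) - A.mulVec (f (x t))))
        (𝓝[>] t) (𝓝 0) := by
      have h1 : Tendsto (fun z => (z - t)⁻¹ • (f (x z) - f (x t))) (𝓝[>] t)
          (𝓝 (A.mulVec (f (x t)))) := by
        have := (hasDerivWithinAt_iff_tendsto_slope.mp hyd).mono_left hsub
        refine this.congr fun z => ?_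
        rw [slope_def_module]
      have h2 : Tendsto (fun z => (z - t)⁻¹ • (f (x z) - f (x t)) - A.mulVec (f (x t)))
          (𝓝[>] t) (𝓝 0) := by
        simpa using h1.sub_const (A.mulVec (f (x t)))
      have := ((mm_cont hN).tendsto 0).comp h2
      rwa [mm_zero hN] at this
    have hevA : ∀ᶠ z in 𝓝[>] t,
        N ((z - t)⁻¹ • (f (x z) - f (x t)) - A.mulVec (f (x t))) < ε₀ / 2 :=
      hd.eventually_lt_const (by positivity)
    -- the matrix measure bound
    have hmap : Tendsto (fun z => z - t) (𝓝[>] t) (𝓝[>] (0:ℝ)) := by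
      apply tendsto_nhdsWithin_of_tendsto_nhds_of_eventually_within
      · have : Tendsto (fun z => z - t) (𝓝 t) (𝓝 (t - t)) :=
          (continuous_id.sub continuous_const).tendsto t
        rw [sub_self] at this
        exact this.mono_left nhdsWithin_le_nhds
      · filter_upwards [self_mem_nhdsWithin] with z hz
        exact sub_pos.mpr (show t < z from hz)
    have hlt : matMeasure N A < -c + ε₁ := lt_of_le_of_lt (hμ (x t)) (by linarith)
    have hevB : ∀ᶠ z in 𝓝[>] t,
        (opNorm N (1 + (z - t) • A) - 1) / (z - t) < -c + ε₁ :=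
      hmap.eventually ((mm_tendsto hN hn A).eventually_lt_const hlt)
    -- combine
    apply Filter.Eventually.frequently
    filter_upwards [hevA, hevB, self_mem_nhdsWithin] with z hzA hzB hzt
    have hh : 0 < z - t := sub_pos.mpr hzt
    set h := z - t with hh'
    set d := (z - t)⁻¹ • (f (x z) - f (x t)) - A.mulVec (f (x t)) with hd'
    have hyz : f (x z) = (1 + h • A).mulVec (f (x t)) + h • d := by
      have e1 : (1 + h • A).mulVec (f (x t)) = f (x t) + h • A.mulVec (f (x t)) := by
        rw [Matrix.add_mulVec, Matrix.one_mulVec, Matrix.smul_mulVec]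
      have e2 : h • ((z - t)⁻¹ • (f (x z) - f (x t))) = f (x z) - f (x t) := by
        rw [smul_smul, hh', mul_inv_cancel₀ hh.ne', one_smul]
      rw [e1, hd', smul_sub, e2]
      abel
    have tri : N (f (x z)) ≤ opNorm N (1 + h • A) * gt + h * N d := by
      rw [hyz]
      calc N ((1 + h • A).mulVec (f (x t)) + h • d)
          ≤ N ((1 + h • A).mulVec (f (x t))) + N (h • d) := hN.2.2 _ _
        _ ≤ opNorm N (1 + h • A) * gt + h * N d := by
            refine add_le_add (opNorm_mulVec_le hN hn _ _) ?_
            rw [hN.2.1, abs_of_pos hh]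
    have slope_le : (z - t)⁻¹ * (N (f (x z)) - gt)
        ≤ (opNorm N (1 + h • A) - 1) / h * gt + N d := by
      rw [← hh']
      have h1 : N (f (x z)) - gt ≤ (opNorm N (1 + h • A) - 1) * gt + h * N d := by
        nlinarith [tri]
      have h2 := mul_le_mul_of_nonneg_left h1 (inv_nonneg.mpr hh.le)
      calc h⁻¹ * (N (f (x z)) - gt)
          ≤ h⁻¹ * ((opNorm N (1 + h • A) - 1) * gt + h * N d) := h2
        _ = (opNorm N (1 + h • A) - 1) / h * gt + N d := by
            field_simp
    have hφz : (opNorm N (1 + h • A) - 1) / h < -c + ε₁ := hzB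
    have hNd : N d < ε₀ / 2 := hzA
    have step : (opNorm N (1 + h • A) - 1) / h * gt ≤ (-c + ε₁) * gt :=
      mul_le_mul_of_nonneg_right hφz.le hgt0
    have step2 : ε₁ * gt ≤ ε₀ / 2 := by
      rw [hε₁def]
      rw [div_mul_eq_mul_div, div_le_div_iff₀ (by positivity) (by norm_num)]
      nlinarith
    calc (z - t)⁻¹ * (N (f (x z)) - gt) ≤ (opNorm N (1 + h • A) - 1) / h * gt + N d := slope_le
      _ < (-c + ε₁) * gt + ε₀ / 2 := by
          have := add_lt_add_of_le_of_lt step hNd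
          linarith [step]
      _ ≤ r := by nlinarith
  have key := le_gronwallBound_of_liminf_deriv_right_le (f' := fun t => -c * N (f (x t)))
    (δ := N (f (x 0))) (K := -c) (ε := 0) hgc hslope le_rfl
    (fun t _ => by simp) T ⟨hT, le_rfl⟩
  rwa [gronwallBound_ε0, sub_zero] at key
end

section
/- Let f : ℝⁿ → ℝⁿ be C¹ with μ(J(x)) ≤ −c < 0 for all x (μ the matrix measure of norm |·|). Then |f(x) − f(y)| ≥ c |x − y| for all x, y ∈ ℝⁿ. -/
open Matrix Filter Set Topology
open MeasureTheory Metric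

namespace CoLip
variable {n : ℕ} {N : (Fin n → ℝ) → ℝ}

lemma N_zero (hN : IsNorm N) : N 0 = 0 := (hN.1 0).mpr rfl

lemma N_neg (hN : IsNorm N) (v : Fin n → ℝ) : N (-v) = N v := by
  have := hN.2.1 (-1) v; simpa using this

lemma N_nonneg (hN : IsNorm N) (v : Fin n → ℝ) : 0 ≤ N v := by
  have h := hN.2.2 v (-v)
  rw [add_neg_cancel, N_zero hN, N_neg hN] at h
  linarith

lemma N_sub_le (hN : IsNorm N) (a b : Fin n → ℝ) : N a - N b ≤ N (a - b) := by
  have h := hN.2.2 (a - b) b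
  simp only [sub_add_cancel] at h
  linarith

lemma N_sum_le (hN : IsNorm N) {ι : Type*} (s : Finset ι) (u : ι → (Fin n → ℝ)) :
    N (∑ i ∈ s, u i) ≤ ∑ i ∈ s, N (u i) := by
  classical
  induction s using Finset.induction_on with
  | empty => simp [N_zero hN]
  | insert _ _ h ih =>
    rw [Finset.sum_insert h, Finset.sum_insert h]
    exact le_trans (hN.2.2 _ _) (by linarith)

noncomputable def CN {n : ℕ} (N : (Fin n → ℝ) → ℝ) : ℝ := ∑ i : Fin n, N (Pi.single i 1 : Fin n → ℝ)

lemma CN_nonneg (hN : IsNorm N) : 0 ≤ CN N :=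
  Finset.sum_nonneg fun i _ => N_nonneg hN _

lemma repr_single (v : Fin n → ℝ) : ∑ i : Fin n, v i • (Pi.single i 1 : Fin n → ℝ) = v := by
  funext j
  simp [Finset.sum_apply, Pi.single_apply]

lemma N_le_CN (hN : IsNorm N) (v : Fin n → ℝ) : N v ≤ CN N * ‖v‖ := by
  calc N v = N (∑ i : Fin n, v i • (Pi.single i 1 : Fin n → ℝ)) := by rw [repr_single]
    _ ≤ ∑ i : Fin n, N (v i • (Pi.single i 1 : Fin n → ℝ)) := N_sum_le hN _ _
    _ = ∑ i : Fin n, |v i| * N (Pi.single i 1 : Fin n → ℝ) := by simp [hN.2.1]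
    _ ≤ ∑ i : Fin n, ‖v‖ * N (Pi.single i 1 : Fin n → ℝ) := by
        refine Finset.sum_le_sum fun i _ => mul_le_mul_of_nonneg_right ?_ (N_nonneg hN _)
        simpa [Real.norm_eq_abs] using norm_le_pi_norm v i
    _ = CN N * ‖v‖ := by rw [CN, Finset.sum_mul]; simp [mul_comm]

lemma N_continuous (hN : IsNorm N) : Continuous N := by
  have key : ∀ a b : Fin n → ℝ, dist (N a) (N b) ≤ CN N * dist a b := by
    intro a b
    rw [Real.dist_eq, dist_eq_norm]
    have h1 := (N_sub_le hN a b).trans (N_le_CN hN _)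
    have h2 := (N_sub_le hN b a).trans (N_le_CN hN _)
    rw [show b - a = -(a-b) by ring, norm_neg] at h2
    rw [abs_le]; constructor <;> linarith
  have : LipschitzWith (Real.toNNReal (CN N)) N := by
    refine LipschitzWith.of_dist_le_mul fun a b => (key a b).trans ?_
    exact mul_le_mul_of_nonneg_right (by rw [Real.coe_toNNReal']; exact le_max_left _ _) dist_nonneg
  exact this.continuous

lemma exists_alpha (hN : IsNorm N) (hn : 0 < n) : ∃ α > 0, ∀ v, α * ‖v‖ ≤ N v := by
  have hnt : Nontrivial (Fin n → ℝ) := by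
    refine ⟨0, Pi.single ⟨0, hn⟩ 1, fun h => ?_⟩
    have := congrFun h ⟨0, hn⟩
    simp at this
  obtain ⟨v₀, hv₀⟩ := NormedSpace.sphere_nonempty (E := Fin n → ℝ) (x := 0) (r := 1) |>.mpr zero_le_one
  obtain ⟨w, hw, hmin⟩ := (isCompact_sphere (0 : Fin n → ℝ) 1).exists_isMinOn ⟨v₀, hv₀⟩
    (N_continuous hN).continuousOn
  have hw1 : ‖w‖ = 1 := by simpa using mem_sphere_zero_iff_norm.mp hw
  have hwne : w ≠ 0 := by intro h; rw [h] at hw1; simp at hw1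
  have hNw : 0 < N w := lt_of_le_of_ne (N_nonneg hN w) (fun h => hwne ((hN.1 w).mp h.symm))
  refine ⟨N w, hNw, fun v => ?_⟩
  rcases eq_or_ne v 0 with rfl | hv
  · simp [N_zero hN]
  · have hvn : ‖v‖ ≠ 0 := norm_ne_zero_iff.mpr hv
    have hu : (‖v‖⁻¹ • v) ∈ sphere (0 : Fin n → ℝ) 1 := by
      rw [mem_sphere_zero_iff_norm, norm_smul]
      simp [abs_of_nonneg (norm_nonneg v), inv_mul_cancel₀ hvn]
    have h1 : N w ≤ N (‖v‖⁻¹ • v) := hmin hu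
    have h2 : N (‖v‖⁻¹ • v) = ‖v‖⁻¹ * N v := by
      rw [hN.2.1]; congr 1; rw [abs_of_pos (by positivity)]
    rw [h2] at h1
    rw [mul_comm]
    calc ‖v‖ * N w ≤ ‖v‖ * (‖v‖⁻¹ * N v) := by
          exact mul_le_mul_of_nonneg_left h1 (norm_nonneg v)
      _ = N v := by field_simp

end CoLip

namespace CoLip
variable {n : ℕ} {N : (Fin n → ℝ) → ℝ} {α : ℝ}

noncomputable def eS {n : ℕ} (A : Matrix (Fin n) (Fin n) ℝ) : ℝ := ∑ i, ∑ j, |A i j|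

lemma eS_nonneg (A : Matrix (Fin n) (Fin n) ℝ) : 0 ≤ eS A :=
  Finset.sum_nonneg fun _ _ => Finset.sum_nonneg fun _ _ => abs_nonneg _

lemma eS_sub_comm (A B : Matrix (Fin n) (Fin n) ℝ) : eS (A - B) = eS (B - A) := by
  unfold eS
  congr 1; funext i; congr 1; funext j
  simp [Matrix.sub_apply, abs_sub_comm]

lemma mulVec_norm_le (A : Matrix (Fin n) (Fin n) ℝ) (v : Fin n → ℝ) :
    ‖A.mulVec v‖ ≤ eS A * ‖v‖ := by
  have hb : 0 ≤ eS A * ‖v‖ := mul_nonneg (eS_nonneg A) (norm_nonneg v)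
  rw [pi_norm_le_iff_of_nonneg hb]
  intro i
  rw [Real.norm_eq_abs, Matrix.mulVec, dotProduct]
  calc |∑ j, A i j * v j| ≤ ∑ j, |A i j * v j| := Finset.abs_sum_le_sum_abs _ _
    _ = ∑ j, |A i j| * |v j| := by simp [abs_mul]
    _ ≤ ∑ j, |A i j| * ‖v‖ := by
        refine Finset.sum_le_sum fun j _ => mul_le_mul_of_nonneg_left ?_ (abs_nonneg _)
        simpa [Real.norm_eq_abs] using norm_le_pi_norm v j
    _ = (∑ j, |A i j|) * ‖v‖ := by rw [Finset.sum_mul]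
    _ ≤ eS A * ‖v‖ := by
        refine mul_le_mul_of_nonneg_right ?_ (norm_nonneg v)
        exact Finset.single_le_sum (f := fun i => ∑ j, |A i j|)
          (fun i _ => Finset.sum_nonneg fun j _ => abs_nonneg _) (Finset.mem_univ i)

lemma N_mulVec_le (hN : IsNorm N) (hα0 : 0 < α) (hα : ∀ v, α * ‖v‖ ≤ N v)
    (A : Matrix (Fin n) (Fin n) ℝ) (v : Fin n → ℝ) :
    N (A.mulVec v) ≤ (CN N * eS A / α) * N v := by
  calc N (A.mulVec v) ≤ CN N * ‖A.mulVec v‖ := N_le_CN hN _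
    _ ≤ CN N * (eS A * ‖v‖) :=
        mul_le_mul_of_nonneg_left (mulVec_norm_le A v) (CN_nonneg hN)
    _ = (CN N * eS A / α) * (α * ‖v‖) := by field_simp
    _ ≤ (CN N * eS A / α) * N v := by
        refine mul_le_mul_of_nonneg_left (hα v) ?_
        have := CN_nonneg hN; have := eS_nonneg A; positivity

lemma opSet_nonempty (hN : IsNorm N) (A : Matrix (Fin n) (Fin n) ℝ) :
    ((fun v => N (A.mulVec v)) '' {v | N v ≤ 1}).Nonempty :=
  ⟨N (A.mulVec 0), ⟨0, by simp [N_zero hN], rfl⟩⟩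

lemma opSet_bddAbove (hN : IsNorm N) (hα0 : 0 < α) (hα : ∀ v, α * ‖v‖ ≤ N v)
    (A : Matrix (Fin n) (Fin n) ℝ) :
    BddAbove ((fun v => N (A.mulVec v)) '' {v | N v ≤ 1}) := by
  refine ⟨CN N * eS A / α, ?_⟩
  rintro x ⟨v, hv, rfl⟩
  calc N (A.mulVec v) ≤ (CN N * eS A / α) * N v := N_mulVec_le hN hα0 hα A v
    _ ≤ (CN N * eS A / α) * 1 := by
        refine mul_le_mul_of_nonneg_left hv ?_
        have := CN_nonneg hN; have := eS_nonneg A; positivity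
    _ = CN N * eS A / α := mul_one _

lemma opNorm_le_of (hN : IsNorm N) {A : Matrix (Fin n) (Fin n) ℝ} {b : ℝ}
    (hb : ∀ v, N v ≤ 1 → N (A.mulVec v) ≤ b) : opNorm N A ≤ b := by
  refine csSup_le (opSet_nonempty hN A) ?_
  rintro x ⟨v, hv, rfl⟩
  exact hb v hv

lemma opNorm_nonneg (hN : IsNorm N) (hα0 : 0 < α) (hα : ∀ v, α * ‖v‖ ≤ N v)
    (A : Matrix (Fin n) (Fin n) ℝ) : 0 ≤ opNorm N A := by
  have : N (A.mulVec 0) ≤ opNorm N A :=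
    le_csSup (opSet_bddAbove hN hα0 hα A) ⟨0, by simp [N_zero hN], rfl⟩
  simpa [Matrix.mulVec_zero, N_zero hN] using this

lemma le_opNorm (hN : IsNorm N) (hα0 : 0 < α) (hα : ∀ v, α * ‖v‖ ≤ N v)
    (A : Matrix (Fin n) (Fin n) ℝ) (v : Fin n → ℝ) :
    N (A.mulVec v) ≤ opNorm N A * N v := by
  rcases eq_or_ne v 0 with rfl | hv
  · simp [Matrix.mulVec_zero, N_zero hN]
  · have hNv : 0 < N v :=
      lt_of_le_of_ne (N_nonneg hN v) (fun h => hv ((hN.1 v).mp h.symm))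
    set u := (N v)⁻¹ • v with hu
    have hNu : N u = 1 := by
      rw [hu, hN.2.1, abs_of_pos (by positivity)]
      field_simp
    have h1 : N (A.mulVec u) ≤ opNorm N A :=
      le_csSup (opSet_bddAbove hN hα0 hα A) ⟨u, le_of_eq hNu, rfl⟩
    have h2 : A.mulVec u = (N v)⁻¹ • A.mulVec v := by
      rw [hu, Matrix.mulVec_smul]
    rw [h2, hN.2.1, abs_of_pos (by positivity)] at h1
    calc N (A.mulVec v) = N v * ((N v)⁻¹ * N (A.mulVec v)) := by field_simp
      _ ≤ N v * opNorm N A := mul_le_mul_of_nonneg_left h1 (le_of_lt hNv)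
      _ = opNorm N A * N v := mul_comm _ _

lemma opNorm_one (hN : IsNorm N) (hα0 : 0 < α) (hα : ∀ v, α * ‖v‖ ≤ N v)
    {v₁ : Fin n → ℝ} (hv₁ : N v₁ = 1) : opNorm N (1 : Matrix (Fin n) (Fin n) ℝ) = 1 := by
  refine le_antisymm (opNorm_le_of hN fun v hv => by rwa [Matrix.one_mulVec]) ?_
  have : N ((1 : Matrix (Fin n) (Fin n) ℝ).mulVec v₁) ≤ opNorm N 1 :=
    le_csSup (opSet_bddAbove hN hα0 hα 1) ⟨v₁, le_of_eq hv₁, rfl⟩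
  rwa [Matrix.one_mulVec, hv₁] at this

lemma opNorm_comb (hN : IsNorm N) (hα0 : 0 < α) (hα : ∀ v, α * ‖v‖ ≤ N v)
    {a b : ℝ} (ha : 0 ≤ a) (hb : 0 ≤ b) (X Y : Matrix (Fin n) (Fin n) ℝ) :
    opNorm N (a • X + b • Y) ≤ a * opNorm N X + b * opNorm N Y := by
  refine opNorm_le_of hN fun v hv => ?_
  have hrw : (a • X + b • Y).mulVec v = a • X.mulVec v + b • Y.mulVec v := by
    rw [Matrix.add_mulVec, Matrix.smul_mulVec, Matrix.smul_mulVec]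
  rw [hrw]
  calc N (a • X.mulVec v + b • Y.mulVec v)
      ≤ N (a • X.mulVec v) + N (b • Y.mulVec v) := hN.2.2 _ _
    _ = a * N (X.mulVec v) + b * N (Y.mulVec v) := by
        rw [hN.2.1, hN.2.1, abs_of_nonneg ha, abs_of_nonneg hb]
    _ ≤ a * (opNorm N X * N v) + b * (opNorm N Y * N v) := by
        have h1 := le_opNorm hN hα0 hα X v
        have h2 := le_opNorm hN hα0 hα Y v
        have := mul_le_mul_of_nonneg_left h1 ha
        have := mul_le_mul_of_nonneg_left h2 hb
        linarith
    _ ≤ a * opNorm N X + b * opNorm N Y := by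
        have h1 : opNorm N X * N v ≤ opNorm N X * 1 :=
          mul_le_mul_of_nonneg_left hv (opNorm_nonneg hN hα0 hα X)
        have h2 : opNorm N Y * N v ≤ opNorm N Y * 1 :=
          mul_le_mul_of_nonneg_left hv (opNorm_nonneg hN hα0 hα Y)
        have := mul_le_mul_of_nonneg_left h1 ha
        have := mul_le_mul_of_nonneg_left h2 hb
        simp only [mul_one] at *
        linarith

lemma opNorm_sub_le (hN : IsNorm N) (hα0 : 0 < α) (hα : ∀ v, α * ‖v‖ ≤ N v)
    (X Y : Matrix (Fin n) (Fin n) ℝ) :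
    |opNorm N X - opNorm N Y| ≤ (CN N / α) * eS (X - Y) := by
  have key : ∀ P Q : Matrix (Fin n) (Fin n) ℝ,
      opNorm N P ≤ opNorm N Q + (CN N / α) * eS (P - Q) := by
    intro P Q
    refine opNorm_le_of hN fun v hv => ?_
    have hrw : P.mulVec v = Q.mulVec v + (P - Q).mulVec v := by
      rw [← Matrix.add_mulVec, add_sub_cancel]
    rw [hrw]
    calc N (Q.mulVec v + (P - Q).mulVec v)
        ≤ N (Q.mulVec v) + N ((P - Q).mulVec v) := hN.2.2 _ _
      _ ≤ opNorm N Q * N v + (CN N * eS (P - Q) / α) * N v := by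
          have h1 := le_opNorm hN hα0 hα Q v
          have h2 := N_mulVec_le hN hα0 hα (P - Q) v
          linarith
      _ ≤ opNorm N Q * 1 + (CN N * eS (P - Q) / α) * 1 := by
          have h1 := mul_le_mul_of_nonneg_left hv (opNorm_nonneg hN hα0 hα Q)
          have hc : 0 ≤ CN N * eS (P - Q) / α := by
            have := CN_nonneg hN; have := eS_nonneg (P - Q); positivity
          have h2 := mul_le_mul_of_nonneg_left hv hc
          linarith
      _ = opNorm N Q + (CN N / α) * eS (P - Q) := by ring
  have h1 := key X Y
  have h2 := key Y X
  rw [eS_sub_comm Y X] at h2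
  rw [abs_le]; constructor <;> linarith

end CoLip

namespace CoLip
variable {n : ℕ} {N : (Fin n → ℝ) → ℝ} {α : ℝ}

noncomputable def q {n : ℕ} (N : (Fin n → ℝ) → ℝ) (A : Matrix (Fin n) (Fin n) ℝ) (h : ℝ) : ℝ :=
  (opNorm N (1 + h • A) - 1) / h

lemma q_mono (hN : IsNorm N) (hα0 : 0 < α) (hα : ∀ v, α * ‖v‖ ≤ N v)
    {v₁ : Fin n → ℝ} (hv₁ : N v₁ = 1) (A : Matrix (Fin n) (Fin n) ℝ)
    {h₁ h₂ : ℝ} (h1 : 0 < h₁) (h12 : h₁ ≤ h₂) : q N A h₁ ≤ q N A h₂ := by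
  have h2 : 0 < h₂ := lt_of_lt_of_le h1 h12
  set t := h₁ / h₂ with htdef
  have ht0 : 0 ≤ t := by positivity
  have hth : t * h₂ = h₁ := div_mul_cancel₀ _ (ne_of_gt h2)
  have ht1 : t ≤ 1 := by rw [htdef, div_le_one h2]; exact h12
  have key : (1 : Matrix (Fin n) (Fin n) ℝ) + h₁ • A
      = t • ((1 : Matrix (Fin n) (Fin n) ℝ) + h₂ • A) + (1 - t) • (1 : Matrix (Fin n) (Fin n) ℝ) := by
    rw [smul_add, smul_smul, hth]
    rw [sub_smul, one_smul]
    abel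
  have hcomb := opNorm_comb hN hα0 hα ht0 (by linarith : (0:ℝ) ≤ 1 - t)
    ((1 : Matrix (Fin n) (Fin n) ℝ) + h₂ • A) 1
  rw [← key, opNorm_one hN hα0 hα hv₁] at hcomb
  -- hcomb : opNorm N (1 + h₁ • A) ≤ t * opNorm N (1 + h₂ • A) + (1 - t) * 1
  rw [q, q, div_le_div_iff₀ h1 h2]
  have e1 : opNorm N (1 + h₁ • A) - 1 ≤ t * (opNorm N (1 + h₂ • A) - 1) := by linarith
  have e2 : (opNorm N (1 + h₁ • A) - 1) * h₂ ≤ t * (opNorm N (1 + h₂ • A) - 1) * h₂ :=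
    mul_le_mul_of_nonneg_right e1 h2.le
  have e3 : t * (opNorm N (1 + h₂ • A) - 1) * h₂ = (t * h₂) * (opNorm N (1 + h₂ • A) - 1) := by ring
  rw [e3, hth] at e2
  linarith

lemma q_lower (hN : IsNorm N) (hα0 : 0 < α) (hα : ∀ v, α * ‖v‖ ≤ N v)
    {v₁ : Fin n → ℝ} (hv₁ : N v₁ = 1) (A : Matrix (Fin n) (Fin n) ℝ)
    {h : ℝ} (hh : 0 < h) : -(CN N * eS A / α) ≤ q N A h := by
  have hmem : N (((1 : Matrix (Fin n) (Fin n) ℝ) + h • A).mulVec v₁)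
      ≤ opNorm N (1 + h • A) :=
    le_csSup (opSet_bddAbove hN hα0 hα _) ⟨v₁, le_of_eq hv₁, rfl⟩
  have hrw : ((1 : Matrix (Fin n) (Fin n) ℝ) + h • A).mulVec v₁
      = v₁ + h • A.mulVec v₁ := by
    rw [Matrix.add_mulVec, Matrix.one_mulVec, Matrix.smul_mulVec]
  rw [hrw] at hmem
  have htri : N v₁ - N (h • A.mulVec v₁) ≤ N (v₁ + h • A.mulVec v₁) := by
    have := N_sub_le hN v₁ (-(h • A.mulVec v₁))
    rw [sub_neg_eq_add, N_neg hN] at this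
    linarith
  have hbound : N (h • A.mulVec v₁) ≤ h * (CN N * eS A / α) := by
    rw [hN.2.1, abs_of_pos hh]
    refine mul_le_mul_of_nonneg_left ?_ (le_of_lt hh)
    have := N_mulVec_le hN hα0 hα A v₁
    rwa [hv₁, mul_one] at this
  rw [q, le_div_iff₀ hh]
  rw [hv₁] at htri
  nlinarith

lemma matMeasure_eq_sInf (hN : IsNorm N) (hα0 : 0 < α) (hα : ∀ v, α * ‖v‖ ≤ N v)
    {v₁ : Fin n → ℝ} (hv₁ : N v₁ = 1) (A : Matrix (Fin n) (Fin n) ℝ) :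
    matMeasure N A = sInf (q N A '' Ioi 0) := by
  have hmono : MonotoneOn (q N A) (Ioi (0:ℝ)) := fun a ha b _ hab =>
    q_mono hN hα0 hα hv₁ A ha hab
  have hbdd : BddBelow (q N A '' Ioi (0:ℝ)) := by
    refine ⟨-(CN N * eS A / α), ?_⟩
    rintro x ⟨h, hh, rfl⟩
    exact q_lower hN hα0 hα hv₁ A hh
  have htend := hmono.tendsto_nhdsGT hbdd
  exact htend.limUnder_eq

lemma exists_good_h (hN : IsNorm N) (hα0 : 0 < α) (hα : ∀ v, α * ‖v‖ ≤ N v)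
    {v₁ : Fin n → ℝ} (hv₁ : N v₁ = 1) {A : Matrix (Fin n) (Fin n) ℝ} {c ε : ℝ}
    (hμ : matMeasure N A ≤ -c) (hε : 0 < ε) :
    ∃ h > 0, q N A h < -c + ε := by
  have heq := matMeasure_eq_sInf hN hα0 hα hv₁ A
  have hne : (q N A '' Ioi (0:ℝ)).Nonempty := ⟨q N A 1, ⟨1, by norm_num, rfl⟩⟩
  have hlt : sInf (q N A '' Ioi (0:ℝ)) < -c + ε := by
    rw [← heq]; linarith
  obtain ⟨x, ⟨h, hh, rfl⟩, hx⟩ := exists_lt_of_csInf_lt hne hlt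
  exact ⟨h, hh, hx⟩

end CoLip

namespace CoLip
variable {n : ℕ} {N : (Fin n → ℝ) → ℝ} {α : ℝ}

lemma jac_mulVec (f : (Fin n → ℝ) → (Fin n → ℝ)) (x v : Fin n → ℝ) :
    (jac f x).mulVec v = fderiv ℝ f x v := by
  rw [jac, ← Matrix.toLin'_apply, Matrix.toLin'_toMatrix']
  rfl

lemma jac_entry_continuous (f : (Fin n → ℝ) → (Fin n → ℝ)) (hf : ContDiff ℝ 1 f)
    {γ : ℝ → (Fin n → ℝ)} (hγ : Continuous γ) (i j : Fin n) :
    Continuous fun t => jac f (γ t) i j := by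
  have h1 : (fun t => jac f (γ t) i j)
      = fun t => fderiv ℝ f (γ t) (fun j' => if j' = j then 1 else 0) i := by
    funext t
    rw [jac, LinearMap.toMatrix'_apply]
    rw [show (Pi.single j 1 : Fin n → ℝ) = fun j' => if j' = j then 1 else 0 from by
      funext j'; simp [Pi.single_apply]]
    rfl
  rw [h1]
  have h2 : Continuous fun t => fderiv ℝ f (γ t) (fun j' => if j' = j then (1:ℝ) else 0) :=
    (((hf.continuous_fderiv one_ne_zero).comp hγ).clm_apply continuous_const)
  exact (continuous_apply i).comp h2

lemma continuous_opNorm_comp (hN : IsNorm N) (hα0 : 0 < α) (hα : ∀ v, α * ‖v‖ ≤ N v)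
    {X : ℝ → Matrix (Fin n) (Fin n) ℝ} (hX : ∀ i j, Continuous fun t => X t i j) :
    Continuous fun t => opNorm N (X t) := by
  rw [continuous_iff_continuousAt]
  intro t₀
  have hcont : Continuous fun t => (CN N / α) * eS (X t - X t₀) := by
    refine continuous_const.mul ?_
    have heq : (fun t => eS (X t - X t₀)) = fun t => ∑ i, ∑ j, |X t i j - X t₀ i j| := by
      funext t; simp [eS, Matrix.sub_apply]
    rw [heq]
    refine continuous_finset_sum _ fun i _ => continuous_finset_sum _ fun j _ => ?_
    exact ((hX i j).sub continuous_const).abs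
  have h0 : Tendsto (fun t => (CN N / α) * eS (X t - X t₀)) (𝓝 t₀) (𝓝 0) := by
    have := hcont.tendsto t₀
    simpa [eS] using this
  rw [ContinuousAt, tendsto_iff_dist_tendsto_zero]
  refine squeeze_zero (fun t => dist_nonneg) (fun t => ?_) h0
  rw [Real.dist_eq]
  exact opNorm_sub_le hN hα0 hα (X t) (X t₀)

lemma uniform_h (hN : IsNorm N) (hα0 : 0 < α) (hα : ∀ v, α * ‖v‖ ≤ N v)
    {v₁ : Fin n → ℝ} (hv₁ : N v₁ = 1) (f : (Fin n → ℝ) → (Fin n → ℝ))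
    (hf : ContDiff ℝ 1 f) {c ε : ℝ}
    (hμ : ∀ x, matMeasure N (jac f x) ≤ -c) (hε : 0 < ε)
    {γ : ℝ → (Fin n → ℝ)} (hγ : Continuous γ) :
    ∃ h > 0, ∀ t ∈ Icc (0:ℝ) 1, q N (jac f (γ t)) h < -c + ε := by
  have hqc : ∀ h : ℝ, Continuous fun s => q N (jac f (γ s)) h := by
    intro h
    have hX : ∀ i j, Continuous fun s =>
        ((1 : Matrix (Fin n) (Fin n) ℝ) + h • jac f (γ s)) i j := by
      intro i j
      have : (fun s => ((1 : Matrix (Fin n) (Fin n) ℝ) + h • jac f (γ s)) i j)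
          = fun s => (1 : Matrix (Fin n) (Fin n) ℝ) i j + h * jac f (γ s) i j := by
        funext s; simp [Matrix.add_apply, Matrix.smul_apply]
      rw [this]
      exact continuous_const.add (continuous_const.mul (jac_entry_continuous f hf hγ i j))
    exact ((continuous_opNorm_comp hN hα0 hα hX).sub continuous_const).div_const h
  have hex : ∀ t : ℝ, ∃ h > 0, q N (jac f (γ t)) h < -c + ε := fun t =>
    exists_good_h hN hα0 hα hv₁ (hμ (γ t)) hε
  choose h0 h0pos hq0 using hex
  set U : ℝ → Set ℝ := fun t => {s | q N (jac f (γ s)) (h0 t) < -c + ε}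
  have hU : ∀ t ∈ Icc (0:ℝ) 1, U t ∈ 𝓝 t := by
    intro t _
    have hopen : IsOpen (U t) := isOpen_lt (hqc (h0 t)) continuous_const
    exact hopen.mem_nhds (hq0 t)
  obtain ⟨T, -, hT⟩ := isCompact_Icc.elim_nhds_subcover U hU
  have hTne : T.Nonempty := by
    by_contra hemp
    rw [Finset.not_nonempty_iff_eq_empty] at hemp
    have h0mem : (0:ℝ) ∈ Icc (0:ℝ) 1 := by norm_num
    have := hT h0mem
    simp [hemp] at this
  refine ⟨T.inf' hTne h0, ?_, ?_⟩
  · exact (Finset.lt_inf'_iff hTne).mpr fun t _ => h0pos t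
  · intro s hs
    obtain ⟨t, ht, hst⟩ := mem_iUnion₂.mp (hT hs)
    have hle : T.inf' hTne h0 ≤ h0 t := Finset.inf'_le _ ht
    have hmono := q_mono hN hα0 hα hv₁ (jac f (γ s))
      ((Finset.lt_inf'_iff hTne).mpr fun t _ => h0pos t) hle
    exact lt_of_le_of_lt hmono hst

lemma ftc (f : (Fin n → ℝ) → (Fin n → ℝ)) (hf : ContDiff ℝ 1 f) (y v : Fin n → ℝ) :
    ∫ t in (0:ℝ)..1, fderiv ℝ f (y + t • v) v = f (y + v) - f y := by
  have hγ : ∀ t : ℝ, HasDerivAt (fun s : ℝ => y + s • v) v t := by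
    intro t
    simpa using ((hasDerivAt_id t).smul_const v).const_add y
  have hF : ∀ t ∈ uIcc (0:ℝ) 1, HasDerivAt (fun s : ℝ => f (y + s • v))
      (fderiv ℝ f (y + t • v) v) t := by
    intro t _
    have h2 : HasFDerivAt f (fderiv ℝ f (y + t • v)) (y + t • v) :=
      (hf.differentiable one_ne_zero _).hasFDerivAt
    exact h2.comp_hasDerivAt t (hγ t)
  have hγc : Continuous fun t : ℝ => y + t • v :=
    continuous_const.add (continuous_id.smul continuous_const)
  have hcont : Continuous fun t : ℝ => fderiv ℝ f (y + t • v) v :=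
    (((hf.continuous_fderiv one_ne_zero).comp hγc).clm_apply continuous_const)
  rw [intervalIntegral.integral_eq_sub_of_hasDerivAt (fun t ht => hF t ht)
    (hcont.intervalIntegrable 0 1)]
  simp

lemma N_integral_le (hN : IsNorm N) {u : ℝ → Fin n → ℝ} (hu : Continuous u) {K : ℝ}
    (hK : ∀ t ∈ Icc (0:ℝ) 1, N (u t) ≤ K) :
    N (∫ t in (0:ℝ)..1, u t) ≤ K := by
  have h1 : ∫ t in (0:ℝ)..1, u t = ∫ t in Icc (0:ℝ) 1, u t := by
    rw [intervalIntegral.integral_of_le zero_le_one, integral_Icc_eq_integral_Ioc]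
  set s : Set (Fin n → ℝ) := {z | N z ≤ K} with hs
  have hconv : Convex ℝ s := by
    intro z hz w hw a b ha hb hab
    have hz' : N z ≤ K := hz
    have hw' : N w ≤ K := hw
    have : N (a • z + b • w) ≤ K := by
      calc N (a • z + b • w) ≤ N (a • z) + N (b • w) := hN.2.2 _ _
        _ = a * N z + b * N w := by rw [hN.2.1, hN.2.1, abs_of_nonneg ha, abs_of_nonneg hb]
        _ ≤ a * K + b * K := by
            have h1 := mul_le_mul_of_nonneg_left hz' ha
            have h2 := mul_le_mul_of_nonneg_left hw' hb
            linarith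
        _ = K := by rw [← add_mul, hab, one_mul]
    exact this
  have hclosed : IsClosed s := IsClosed.preimage (N_continuous hN) isClosed_Iic
  have hmem : (⨍ t in Icc (0:ℝ) 1, u t) ∈ s := by
    refine hconv.set_average_mem hclosed ?_ ?_ ?_ hu.integrableOn_Icc
    · simp [Real.volume_Icc]
    · simp [Real.volume_Icc]
    · exact (ae_restrict_mem measurableSet_Icc).mono fun t ht => hK t ht
  have havg : (⨍ t in Icc (0:ℝ) 1, u t) = ∫ t in Icc (0:ℝ) 1, u t := by
    rw [MeasureTheory.setAverage_eq]
    simp [Real.volume_Icc]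
  rw [h1, ← havg]
  exact hmem

end CoLip


/-- The co-Lipschitz bound: `|f(x) − f(y)| ≥ c|x − y|`. -/
theorem stmt_12 {n : ℕ} (N : (Fin n → ℝ) → ℝ) (hN : IsNorm N)
    (f : (Fin n → ℝ) → (Fin n → ℝ)) (hf : ContDiff ℝ 1 f)
    (c : ℝ) (hc : 0 < c) (hμ : ∀ x, matMeasure N (jac f x) ≤ -c) :
    ∀ x y : Fin n → ℝ, c * N (x - y) ≤ N (f x - f y) := by
  intro x y
  rcases eq_or_ne x y with rfl | hxy
  · simp [CoLip.N_zero hN]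
  have hn : 0 < n := by
    rcases Function.ne_iff.mp hxy with ⟨i, _⟩
    exact i.pos
  obtain ⟨α, hα0, hα⟩ := CoLip.exists_alpha hN hn
  -- a vector of unit N-norm
  have hw0 : (Pi.single (⟨0, hn⟩ : Fin n) 1 : Fin n → ℝ) ≠ 0 := by
    intro h
    have := congrFun h ⟨0, hn⟩
    simp at this
  set w₀ := (Pi.single (⟨0, hn⟩ : Fin n) 1 : Fin n → ℝ) with hw₀def
  have hNw₀ : 0 < N w₀ :=
    lt_of_le_of_ne (CoLip.N_nonneg hN _) fun h => hw0 ((hN.1 _).mp h.symm)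
  have hv₁ : N ((N w₀)⁻¹ • w₀) = 1 := by
    rw [hN.2.1, abs_of_pos (by positivity)]
    field_simp
  set v := x - y with hvdef
  have hvne : v ≠ 0 := sub_ne_zero.mpr hxy
  have hNv : 0 < N v :=
    lt_of_le_of_ne (CoLip.N_nonneg hN v) fun h => hvne ((hN.1 v).mp h.symm)
  set γ := fun t : ℝ => y + t • v with hγdef
  have hγc : Continuous γ := continuous_const.add (continuous_id.smul continuous_const)
  set g := fun t : ℝ => fderiv ℝ f (γ t) v with hgdef
  have hgc : Continuous g :=
    (((hf.continuous_fderiv one_ne_zero).comp hγc).clm_apply continuous_const)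
  have hint : ∫ t in (0:ℝ)..1, g t = f x - f y := by
    have h := CoLip.ftc f hf y v
    have hyx : y + v = x := by rw [hvdef]; abel
    rw [hyx] at h
    exact h
  have hkey : ∀ ε : ℝ, 0 < ε → c * N v ≤ N (f x - f y) + ε * N v := by
    intro ε hε
    obtain ⟨h, hh, hq⟩ := CoLip.uniform_h hN hα0 hα hv₁ f hf hμ hε hγc
    have hu : Continuous fun t => v + h • g t := continuous_const.add (hgc.const_smul h)
    have hb : ∀ t ∈ Icc (0:ℝ) 1, N (v + h • g t) ≤ (1 + h * (-c + ε)) * N v := by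
      intro t ht
      have h1 : ((1 : Matrix (Fin n) (Fin n) ℝ) + h • jac f (γ t)).mulVec v
          = v + h • g t := by
        rw [Matrix.add_mulVec, Matrix.one_mulVec, Matrix.smul_mulVec,
          CoLip.jac_mulVec f]
      have h2 := CoLip.le_opNorm hN hα0 hα (1 + h • jac f (γ t)) v
      rw [h1] at h2
      have h3 : opNorm N (1 + h • jac f (γ t)) ≤ 1 + h * (-c + ε) := by
        have hq' := hq t ht
        rw [CoLip.q, div_lt_iff₀ hh] at hq'
        nlinarith
      calc N (v + h • g t) ≤ opNorm N (1 + h • jac f (γ t)) * N v := h2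
        _ ≤ (1 + h * (-c + ε)) * N v :=
            mul_le_mul_of_nonneg_right h3 (CoLip.N_nonneg hN v)
    have hNle := CoLip.N_integral_le hN hu hb
    have hsum : ∫ t in (0:ℝ)..1, (v + h • g t) = v + h • (f x - f y) := by
      rw [intervalIntegral.integral_add (g := fun t => h • g t) intervalIntegrable_const
        ((hgc.const_smul h).intervalIntegrable 0 1), intervalIntegral.integral_const,
        intervalIntegral.integral_smul, hint]
      simp
    rw [hsum] at hNle
    have htri : N v - h * N (f x - f y) ≤ N (v + h • (f x - f y)) := by
      have h4 := CoLip.N_sub_le hN v (-(h • (f x - f y)))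
      rw [sub_neg_eq_add, CoLip.N_neg hN, hN.2.1, abs_of_pos hh] at h4
      linarith
    have hcomb : N v - h * N (f x - f y) ≤ (1 + h * (-c + ε)) * N v :=
      le_trans htri hNle
    have hdiv : h * ((c - ε) * N v) ≤ h * N (f x - f y) := by nlinarith
    have := le_of_mul_le_mul_left hdiv hh
    linarith
  by_contra hcon
  push_neg at hcon
  have hεpos : 0 < (c * N v - N (f x - f y)) / (2 * N v) := by
    apply div_pos (by linarith) (by linarith)
  have hk := hkey _ hεpos
  have heq : (c * N v - N (f x - f y)) / (2 * N v) * N v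
      = (c * N v - N (f x - f y)) / 2 := by
    field_simp
  rw [heq] at hk
  linarith
end

section
/- Krasovskii's theorem: Let f : ℝⁿ → ℝⁿ be C¹ with Jacobian J(x), and suppose there exist a symmetric positive definite matrix P and c > 0 such that P J(x) + J(x)ᵀ P ≤ −2c P (Loewner order) for all x. Then V(x) = f(x)ᵀ P f(x) satisfies V(x(t)) ≤ V(x(0)) e^{−2ct} along every solution of ẋ = f(x). -/
open Matrix Filter Set Topology

lemma quad_deriv {n : ℕ} (P : Matrix (Fin n) (Fin n) ℝ) {g : ℝ → Fin n → ℝ}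
    {g' : Fin n → ℝ} {s : Set ℝ} {t : ℝ} (hg : HasDerivWithinAt g g' s t) :
    HasDerivWithinAt (fun τ => g τ ⬝ᵥ P.mulVec (g τ))
      (g' ⬝ᵥ P.mulVec (g t) + g t ⬝ᵥ P.mulVec g') s t := by
  have hcomp : ∀ i, HasDerivWithinAt (fun τ => g τ i) (g' i) s t := fun i =>
    (ContinuousLinearMap.proj i : (Fin n → ℝ) →L[ℝ] ℝ).hasFDerivAt.comp_hasDerivWithinAt t hg
  have h : HasDerivWithinAt (fun τ => ∑ i, ∑ j, g τ i * (P i j * g τ j))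
      (∑ i, ∑ j, (g' i * (P i j * g t j) + g t i * (P i j * g' j))) s t := by
    apply HasDerivWithinAt.fun_sum; intro i _
    apply HasDerivWithinAt.fun_sum; intro j _
    exact (hcomp i).mul ((hcomp j).const_mul _)
  convert h using 1
  · ext τ; simp [dotProduct, mulVec, Finset.mul_sum]
  · simp [dotProduct, mulVec, Finset.mul_sum, Finset.sum_add_distrib]


/-- Krasovskii's theorem: if `PJ(x) + J(x)ᵀP ≤ -2cP` for all `x`, then
`V(x) = f(x)ᵀPf(x)` decreases like `e^{-2ct}` along solutions. -/
theorem stmt_14 {n : ℕ} (P : Matrix (Fin n) (Fin n) ℝ) (hP : P.PosDef)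
    (f : (Fin n → ℝ) → (Fin n → ℝ)) (hf : ContDiff ℝ 1 f)
    (c : ℝ) (hc : 0 < c)
    (hL : ∀ x, (-(P * jac f x + (jac f x)ᵀ * P + (2 * c) • P)).PosSemidef)
    (x : ℝ → (Fin n → ℝ))
    (hx : ∀ t ∈ Ici (0:ℝ), HasDerivWithinAt x (f (x t)) (Ici 0) t) :
    ∀ t ∈ Ici (0:ℝ),
      f (x t) ⬝ᵥ P.mulVec (f (x t)) ≤
        (f (x 0) ⬝ᵥ P.mulVec (f (x 0))) * Real.exp (-(2 * c) * t) := by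
  have hfd : Differentiable ℝ f := hf.differentiable one_ne_zero
  set g : ℝ → (Fin n → ℝ) := fun s => f (x s) with hgdef
  set V : ℝ → ℝ := fun s => g s ⬝ᵥ P.mulVec (g s) with hVdef
  set V' : ℝ → ℝ := fun s =>
    (jac f (x s)).mulVec (g s) ⬝ᵥ P.mulVec (g s)
      + g s ⬝ᵥ P.mulVec ((jac f (x s)).mulVec (g s)) with hV'def
  have hgd : ∀ s ∈ Ici (0:ℝ),
      HasDerivWithinAt g ((jac f (x s)).mulVec (g s)) (Ici 0) s := by
    intro s hs
    have h1 : HasFDerivAt f (fderiv ℝ f (x s)) (x s) := (hfd (x s)).hasFDerivAt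
    have h2 := h1.comp_hasDerivWithinAt s (hx s hs)
    refine h2.congr_deriv (Eq.symm ?_)
    rw [hgdef]
    show (jac f (x s)).mulVec (f (x s)) = _
    rw [jac, ← Matrix.toLin'_apply, Matrix.toLin'_toMatrix']
    rfl
  have hVd : ∀ s ∈ Ici (0:ℝ), HasDerivWithinAt V (V' s) (Ici 0) s :=
    fun s hs => quad_deriv P (hgd s hs)
  have hbound : ∀ s, V' s ≤ -(2 * c) * V s := by
    intro s
    have h0 := (hL (x s)).dotProduct_mulVec_nonneg (g s)
    simp only [Matrix.neg_mulVec, Matrix.add_mulVec, Matrix.smul_mulVec,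
      dotProduct_neg, dotProduct_add, dotProduct_smul, star_trivial,
      ← Matrix.mulVec_mulVec, smul_eq_mul] at h0
    have ht : g s ⬝ᵥ (jac f (x s))ᵀ.mulVec (P.mulVec (g s))
        = (jac f (x s)).mulVec (g s) ⬝ᵥ P.mulVec (g s) := by
      rw [Matrix.dotProduct_mulVec, Matrix.vecMul_transpose]
    simp only [hV'def, hVdef]
    nlinarith [h0, ht]
  intro t ht
  have key := le_gronwallBound_of_liminf_deriv_right_le (f := V) (f' := V')
    (δ := V 0) (K := -(2*c)) (ε := 0) (a := 0) (b := t)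
    (fun s hs => ((hVd s hs.1).continuousWithinAt).mono Icc_subset_Ici_self)
    (fun s hs r hr => ((hVd s hs.1).mono (Ici_subset_Ici.2 hs.1)).liminf_right_slope_le hr)
    le_rfl
    (fun s hs => by simpa using hbound s)
    t ⟨ht, le_rfl⟩
  rw [sub_zero, gronwallBound_ε0] at key
  simpa [neg_mul] using key
end

section
/- Let f : ℝ → ℝ be C¹ with f'(x) ≤ −c < 0 for all x. Then for every solution x(t) of ẋ = f(x), |f(x(t))| ≤ |f(x(0))| e^{−ct} for all t ≥ 0. -/
open Matrix Filter Set Topology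

/-- The scalar case: `f' ≤ -c < 0` implies `|f(x(t))| ≤ |f(x(0))| e^{-ct}`. -/
theorem stmt_18 (f : ℝ → ℝ) (hf : ContDiff ℝ 1 f)
    (c : ℝ) (hc : 0 < c) (hder : ∀ x, deriv f x ≤ -c)
    (x : ℝ → ℝ) (hx : ∀ t ∈ Ici (0:ℝ), HasDerivWithinAt x (f (x t)) (Ici 0) t) :
    ∀ t ∈ Ici (0:ℝ), |f (x t)| ≤ |f (x 0)| * Real.exp (-c * t) := by
  intro T hT
  set g : ℝ → ℝ := fun t => (f (x t)) ^ 2 with hg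
  set g' : ℝ → ℝ := fun t => 2 * f (x t) * (deriv f (x t) * f (x t)) with hg'
  have hxc : ContinuousOn x (Icc 0 T) := fun t ht =>
    ((hx t (Icc_subset_Ici_self ht)).continuousWithinAt).mono Icc_subset_Ici_self
  have hgc : ContinuousOn g (Icc 0 T) :=
    ((hf.continuous.comp_continuousOn hxc).pow 2)
  have hyd : ∀ t ∈ Ico (0:ℝ) T, HasDerivWithinAt (fun s => f (x s))
      (deriv f (x t) * f (x t)) (Ici t) t := by
    intro t ht
    have hx' : HasDerivWithinAt x (f (x t)) (Ici t) t :=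
      (hx t ht.1).mono (Ici_subset_Ici.2 ht.1)
    exact ((hf.differentiable one_ne_zero (x t)).hasDerivAt).comp_hasDerivWithinAt t hx'
  have hgd : ∀ t ∈ Ico (0:ℝ) T, HasDerivWithinAt g (g' t) (Ici t) t := by
    intro t ht
    have : HasDerivWithinAt (fun s => f (x s) * f (x s))
        (deriv f (x t) * f (x t) * f (x t) + f (x t) * (deriv f (x t) * f (x t))) (Ici t) t :=
      ((hyd t ht).fun_mul (hyd t ht))
    convert this using 1
    simp only [hg', hg, sq]
    ring
  have key : ∀ t ∈ Icc (0:ℝ) T, g t ≤ gronwallBound (g 0) (-(2*c)) 0 (t - 0) := by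
    apply le_gronwallBound_of_liminf_deriv_right_le hgc
    · intro t ht r hr
      exact (hgd t ht).liminf_right_slope_le hr
    · exact le_rfl
    · intro t _
      have h1 := hder (x t)
      have h2 : (0:ℝ) ≤ (f (x t))^2 := sq_nonneg _
      simp only [hg, hg', add_zero]
      nlinarith
  have hgT := key T ⟨hT, le_rfl⟩
  rw [sub_zero, gronwallBound_ε0] at hgT
  have h0 : g 0 = |f (x 0)|^2 := by simp [hg, sq_abs]
  have hexp : Real.exp (-(2*c) * T) = (Real.exp (-c * T))^2 := by
    rw [← Real.exp_nat_mul]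
    ring_nf
  rw [h0, hexp] at hgT
  have : |f (x T)| ^ 2 ≤ (|f (x 0)| * Real.exp (-c * T)) ^ 2 := by
    rw [mul_pow]
    calc |f (x T)| ^ 2 = g T := by simp [hg, sq_abs]
    _ ≤ _ := hgT
  nlinarith [abs_nonneg (f (x T)), mul_nonneg (abs_nonneg (f (x 0))) (Real.exp_pos (-c*T)).le]
end
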